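/- (Validity of Split Conformal Prediction, lower bound.) Let (Ω, P) be a probability space, E a measurable space, n ∈ ℕ, and let (X_1, Y_1), …, (X_{n+1}, Y_{n+1}) be E × ℝ-valued random variables that are exchangeable. Let μ : E → ℝ be a measurable function, α ∈ (0,1), and k = ⌈(1−α)(n+1)⌉, and assume k ≤ n. Define the conformity scores S_i(ω) = |Y_i(ω) − μ(X_i(ω))| for i = 1, …, n, and let Q̂(ω) be the k-th order statistic of the multiset {S_1(ω), …, S_n(ω)}. Then P({ω : μ(X_{n+1}(ω)) − Q̂(ω) ≤ Y_{n+1}(ω) ≤ μ(X_{n+1}(ω)) + Q̂(ω)}) ≥ 1 − α. -/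

import Mathlib

lemma countP_take_le {α} (l : List α) (m : ℕ) (p : α → Bool) :
    (l.take m).countP p ≤ l.countP p := by
  conv_rhs => rw [← List.take_append_drop m l]
  rw [List.countP_append]
  omega

lemma sorted_le_getElem_iff (l : List ℝ) (hs : l.Pairwise (· ≤ ·)) (j : ℕ) (hj : j < l.length)
    (x : ℝ) : x ≤ l[j] ↔ l.countP (fun a => decide (a < x)) ≤ j := by
  constructor
  · intro hx
    have hsplit : l = l.take j ++ l.drop j := (List.take_append_drop j l).symm
    have h1 : (l.take j).countP (fun a => decide (a < x)) ≤ j := by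
      calc (l.take j).countP (fun a => decide (a < x)) ≤ (l.take j).length :=
            List.countP_le_length
        _ ≤ j := by simp [List.length_take]
    have h2 : (l.drop j).countP (fun a => decide (a < x)) = 0 := by
      rw [List.countP_eq_zero]
      intro a ha
      obtain ⟨i, hi, rfl⟩ := List.mem_iff_getElem.mp ha
      rw [List.getElem_drop]
      have hji : j + i < l.length := by
        have := hi; rw [List.length_drop] at this; omega
      have : l[j] ≤ l[j + i] := by
        have := hs.rel_get_of_le (a := ⟨j, hj⟩) (b := ⟨j + i, hji⟩) (by simp [Fin.le_def])
        simpa using this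
      simp only [decide_eq_true_eq]
      push_neg
      linarith
    calc l.countP (fun a => decide (a < x))
        = (l.take j).countP _ + (l.drop j).countP _ := by
          conv_lhs => rw [hsplit]
          rw [List.countP_append]
      _ ≤ j := by omega
  · intro hc
    by_contra hx
    push_neg at hx
    have hall : ∀ a ∈ l.take (j + 1), decide (a < x) = true := by
      intro a ha
      obtain ⟨i, hi, rfl⟩ := List.mem_iff_getElem.mp ha
      rw [List.getElem_take]
      have hil : i < l.length := by
        have := hi; rw [List.length_take] at this; omega
      have hij : i ≤ j := by
        have := hi; rw [List.length_take] at this; omega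
      have : l[i] ≤ l[j] := by
        have := hs.rel_get_of_le (a := ⟨i, hil⟩) (b := ⟨j, hj⟩) (by simp [Fin.le_def, hij])
        simpa using this
      simp only [decide_eq_true_eq]
      linarith
    have h1 : (l.take (j + 1)).countP (fun a => decide (a < x)) = j + 1 := by
      rw [List.countP_eq_length.mpr hall, List.length_take]
      omega
    have h2 := countP_take_le l (j+1) (fun a => decide (a < x))
    omega

lemma sorted_count_le_getElem (l : List ℝ) (hs : l.Pairwise (· ≤ ·)) (j : ℕ) (hj : j < l.length) :
    j + 1 ≤ l.countP (fun a => decide (a ≤ l[j])) := by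
  have hall : ∀ a ∈ l.take (j + 1), decide (a ≤ l[j]) = true := by
    intro a ha
    obtain ⟨i, hi, rfl⟩ := List.mem_iff_getElem.mp ha
    rw [List.getElem_take]
    have hil : i < l.length := by
      have := hi; rw [List.length_take] at this; omega
    have hij : i ≤ j := by
      have := hi; rw [List.length_take] at this; omega
    have : l[i] ≤ l[j] := by
      have := hs.rel_get_of_le (a := ⟨i, hil⟩) (b := ⟨j, hj⟩) (by simp [Fin.le_def, hij])
      simpa using this
    simpa using this
  have h1 : (l.take (j + 1)).countP (fun a => decide (a ≤ l[j])) = j + 1 := by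
    rw [List.countP_eq_length.mpr hall, List.length_take]
    omega
  have h2 := countP_take_le l (j+1) (fun a => decide (a ≤ l[j]))
  omega

lemma multiset_countP_sort (c : Multiset ℝ) (p : ℝ → Prop) [DecidablePred p] :
    Multiset.countP p c = (c.sort (· ≤ ·)).countP (fun a => decide (p a)) := by
  conv_lhs => rw [← Multiset.sort_eq c (· ≤ ·)]
  rfl

lemma countP_map_eq_card_filter {ι : Type*} (s : Finset ι) (v : ι → ℝ) (p : ℝ → Prop)
    [DecidablePred p] :
    Multiset.countP p (s.val.map v) = (s.filter (fun i => p (v i))).card := by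
  rw [Multiset.countP_eq_card_filter, Multiset.filter_map, Multiset.card_map]
  rfl

/-- `x ≤` the `(j+1)`-th order statistic of `c` iff at most `j` elements of `c` are `< x`. -/
lemma le_orderStat_iff (c : Multiset ℝ) (j : ℕ) (hj : j < Multiset.card c) (x : ℝ) :
    x ≤ (c.sort (· ≤ ·)).getD j 0 ↔ Multiset.countP (fun a => a < x) c ≤ j := by
  have hlen : (c.sort (· ≤ ·)).length = Multiset.card c := Multiset.length_sort _
  have hj' : j < (c.sort (· ≤ ·)).length := by omega
  rw [List.getD_eq_getElem _ _ hj', multiset_countP_sort]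
  exact sorted_le_getElem_iff _ (Multiset.pairwise_sort _ _) j hj' x

lemma le_countP_orderStat (c : Multiset ℝ) (j : ℕ) (hj : j < Multiset.card c) :
    j + 1 ≤ Multiset.countP (fun a => a ≤ (c.sort (· ≤ ·)).getD j 0) c := by
  have hlen : (c.sort (· ≤ ·)).length = Multiset.card c := Multiset.length_sort _
  have hj' : j < (c.sort (· ≤ ·)).length := by omega
  rw [List.getD_eq_getElem _ _ hj', multiset_countP_sort]
  exact sorted_count_le_getElem _ (Multiset.pairwise_sort _ _) j hj'

/-- At least `j+1` of the values have strict-rank `≤ j`. -/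
lemma key_count {m : ℕ} (v : Fin m → ℝ) (j : ℕ) (hj : j < m) :
    j + 1 ≤ (Finset.univ.filter fun a : Fin m =>
      (Finset.univ.filter fun i => v i < v a).card ≤ j).card := by
  classical
  set c : Multiset ℝ := Finset.univ.val.map v with hc
  have hcard : Multiset.card c = m := by simp [hc]
  set t : ℝ := (c.sort (· ≤ ·)).getD j 0 with ht
  have hAsub : (Finset.univ.filter fun a : Fin m => v a ≤ t)
      ⊆ (Finset.univ.filter fun a : Fin m =>
        (Finset.univ.filter fun i => v i < v a).card ≤ j) := by
    intro a ha
    rw [Finset.mem_filter] at ha ⊢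
    refine ⟨ha.1, ?_⟩
    have hsub : (Finset.univ.filter fun i => v i < v a)
        ⊆ (Finset.univ.filter fun i => v i < t) := by
      intro i hi
      rw [Finset.mem_filter] at hi ⊢
      exact ⟨hi.1, lt_of_lt_of_le hi.2 ha.2⟩
    have h1 : (Finset.univ.filter fun i => v i < t).card ≤ j := by
      have hb := countP_map_eq_card_filter Finset.univ v (fun a => a < t)
      rw [← hb]
      exact (le_orderStat_iff c j (by omega) t).mp le_rfl
    exact le_trans (Finset.card_le_card hsub) h1
  have h2 : j + 1 ≤ (Finset.univ.filter fun a : Fin m => v a ≤ t).card := by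
    have hb := countP_map_eq_card_filter Finset.univ v (fun a => a ≤ t)
    rw [← hb]
    exact le_countP_orderStat c j (by omega)
  exact le_trans h2 (Finset.card_le_card hAsub)

lemma card_filter_perm {m : ℕ} (σ : Equiv.Perm (Fin m)) (p : Fin m → Prop) [DecidablePred p] :
    (Finset.univ.filter fun i => p (σ i)).card = (Finset.univ.filter p).card := by
  refine Finset.card_bij (fun a _ => σ a) ?_ ?_ ?_
  · intro a ha; rw [Finset.mem_filter] at ha ⊢; exact ⟨Finset.mem_univ _, ha.2⟩
  · intro a _ b _ h; exact σ.injective h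
  · intro b hb
    refine ⟨σ.symm b, ?_, by simp⟩
    rw [Finset.mem_filter] at hb ⊢
    simpa using hb.2

open MeasureTheory
open scoped ENNReal

/-- Validity of Split Conformal Prediction: lower bound. -/
theorem stmt_2 {Ω E : Type*} [MeasurableSpace Ω] [MeasurableSpace E]
    (P : Measure Ω) [IsProbabilityMeasure P] (n : ℕ)
    (X : Fin (n + 1) → Ω → E) (Y : Fin (n + 1) → Ω → ℝ)
    (hmeas : ∀ i, Measurable (fun ω => (X i ω, Y i ω)))
    (hexch : ∀ σ : Equiv.Perm (Fin (n + 1)),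
      Measure.map (fun ω => fun i => (X (σ i) ω, Y (σ i) ω)) P
        = Measure.map (fun ω => fun i => (X i ω, Y i ω)) P)
    (μ : E → ℝ) (hμ : Measurable μ)
    (α : ℝ) (hα : α ∈ Set.Ioo (0 : ℝ) 1)
    (k : ℕ) (hk : k = ⌈(1 - α) * (n + 1 : ℝ)⌉₊) (hkn : k ≤ n)
    (S : Fin (n + 1) → Ω → ℝ) (hS : ∀ i ω, S i ω = |Y i ω - μ (X i ω)|)
    (Q : Ω → ℝ)
    (hQ : ∀ ω, Q ω =
      ((Finset.univ.val.map (fun i : Fin n => S i.castSucc ω)).sort (· ≤ ·)).getD (k - 1) 0) :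
    P {ω | μ (X (Fin.last n) ω) - Q ω ≤ Y (Fin.last n) ω ∧
           Y (Fin.last n) ω ≤ μ (X (Fin.last n) ω) + Q ω}
      ≥ ENNReal.ofReal (1 - α) := by
  classical
  obtain ⟨hα0, hα1⟩ := hα
  have hk1 : 1 ≤ k := by
    rw [hk]
    rw [Nat.one_le_iff_ne_zero, ← Nat.pos_iff_ne_zero, Nat.ceil_pos]
    have h1a : (0:ℝ) < 1 - α := by linarith
    positivity
  -- score function on E × ℝ
  set sfun : E × ℝ → ℝ := fun p => |p.2 - μ p.1| with hsfun_def
  have hsfun : Measurable sfun := (measurable_snd.sub (hμ.comp measurable_fst)).abs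
  -- joint data map
  set V : Ω → (Fin (n + 1) → E × ℝ) := fun ω i => (X i ω, Y i ω) with hV_def
  have hV : Measurable V := measurable_pi_lambda _ (fun i => hmeas i)
  have hSV : ∀ i ω, S i ω = sfun (V ω i) := by
    intro i ω; rw [hS]
  -- rank functions
  set F : Fin (n + 1) → (Fin (n + 1) → E × ℝ) → ℕ := fun j w =>
    (Finset.univ.filter fun i => sfun (w i) < sfun (w j)).card with hF_def
  have hFmeas : ∀ j, Measurable (F j) := by
    intro j
    have : F j = fun w => ∑ i : Fin (n + 1),
        if sfun (w i) < sfun (w j) then 1 else 0 := by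
      funext w
      rw [hF_def]
      exact Finset.card_filter _ _
    rw [this]
    refine Finset.measurable_sum _ fun i _ => ?_
    exact Measurable.ite
      (measurableSet_lt (hsfun.comp (measurable_pi_apply i))
        (hsfun.comp (measurable_pi_apply j)))
      measurable_const measurable_const
  set B : Set (Fin (n + 1) → E × ℝ) := {w | F (Fin.last n) w ≤ k - 1} with hB_def
  have hBmeas : MeasurableSet B := by
    have : B = F (Fin.last n) ⁻¹' (Set.Iic (k - 1)) := rfl
    rw [this]
    exact (hFmeas _) measurableSet_Iic
  set A : Fin (n + 1) → Set Ω := fun j => {ω | F j (V ω) ≤ k - 1} with hA_def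
  have hAmeas : ∀ j, MeasurableSet (A j) := by
    intro j
    have : A j = (fun ω => F j (V ω)) ⁻¹' (Set.Iic (k - 1)) := rfl
    rw [this]
    exact ((hFmeas j).comp hV) measurableSet_Iic
  -- all A j have the same measure
  have hsame : ∀ j, P (A j) = P (A (Fin.last n)) := by
    intro j
    set σ : Equiv.Perm (Fin (n + 1)) := Equiv.swap j (Fin.last n) with hσ_def
    have hVσ : Measurable (fun ω => fun i => (X (σ i) ω, Y (σ i) ω)) :=
      measurable_pi_lambda _ (fun i => hmeas (σ i))
    have hpre : A j = (fun ω => fun i => (X (σ i) ω, Y (σ i) ω)) ⁻¹' B := by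
      ext ω
      simp only [hA_def, hB_def, Set.mem_setOf_eq, Set.mem_preimage]
      have : F (Fin.last n) (fun i => (X (σ i) ω, Y (σ i) ω)) = F j (V ω) := by
        rw [hF_def]
        have hlast : σ (Fin.last n) = j := Equiv.swap_apply_right _ _
        simp only [hlast]
        exact card_filter_perm σ (fun i => sfun (V ω i) < sfun (V ω j))
      rw [this]
    rw [hpre, ← Measure.map_apply hVσ hBmeas, hexch σ, Measure.map_apply hV hBmeas]
    rfl
  -- pointwise: at least k of the A j contain ω
  have hcount : ∀ ω, k ≤ (Finset.univ.filter fun j => ω ∈ A j).card := by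
    intro ω
    have := key_count (fun i => sfun (V ω i)) (k - 1) (by omega)
    have hkk : k - 1 + 1 = k := by omega
    rw [hkk] at this
    exact this
  -- sum of measures
  have hsum : (k : ℝ≥0∞) ≤ ∑ j : Fin (n + 1), P (A j) := by
    have h1 : ∀ j, P (A j) = ∫⁻ ω, (A j).indicator (1 : Ω → ℝ≥0∞) ω ∂P := by
      intro j
      rw [lintegral_indicator_one (hAmeas j)]
    calc (k : ℝ≥0∞) = ∫⁻ _, (k : ℝ≥0∞) ∂P := by
          rw [lintegral_const, measure_univ, mul_one]
      _ ≤ ∫⁻ ω, ∑ j : Fin (n + 1), (A j).indicator (1 : Ω → ℝ≥0∞) ω ∂P := by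
          refine lintegral_mono fun ω => ?_
          have heq : ∑ j : Fin (n + 1), (A j).indicator (1 : Ω → ℝ≥0∞) ω
              = ((Finset.univ.filter fun j => ω ∈ A j).card : ℝ≥0∞) := by
            rw [Finset.card_filter]
            push_cast
            refine Finset.sum_congr rfl fun j _ => ?_
            by_cases h : ω ∈ A j <;> simp [h, Set.indicator_apply]
          rw [heq]
          exact Nat.cast_le.mpr (hcount ω)
      _ = ∑ j : Fin (n + 1), P (A j) := by
          rw [lintegral_finset_sum]
          · exact Finset.sum_congr rfl fun j _ => (h1 j).symm
          · exact fun j _ => Measurable.indicator measurable_const (hAmeas j)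
  have hsum2 : (k : ℝ≥0∞) ≤ (n + 1 : ℕ) * P (A (Fin.last n)) := by
    calc (k : ℝ≥0∞) ≤ ∑ j : Fin (n + 1), P (A j) := hsum
      _ = ∑ _j : Fin (n + 1), P (A (Fin.last n)) := Finset.sum_congr rfl fun j _ => hsame j
      _ = (n + 1 : ℕ) * P (A (Fin.last n)) := by
          rw [Finset.sum_const, Finset.card_univ, Fintype.card_fin, nsmul_eq_mul]
  -- the event equals A (last n)
  have hevent : {ω | μ (X (Fin.last n) ω) - Q ω ≤ Y (Fin.last n) ω ∧
      Y (Fin.last n) ω ≤ μ (X (Fin.last n) ω) + Q ω} = A (Fin.last n) := by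
    ext ω
    simp only [Set.mem_setOf_eq, hA_def]
    have habs : (μ (X (Fin.last n) ω) - Q ω ≤ Y (Fin.last n) ω ∧
        Y (Fin.last n) ω ≤ μ (X (Fin.last n) ω) + Q ω) ↔ S (Fin.last n) ω ≤ Q ω := by
      rw [hS, abs_le]
      constructor
      · rintro ⟨h1, h2⟩; constructor <;> linarith
      · rintro ⟨h1, h2⟩; constructor <;> linarith
    rw [habs]
    -- S last ≤ Q ↔ F last (V ω) ≤ k - 1
    set c : Multiset ℝ := Finset.univ.val.map (fun i : Fin n => S i.castSucc ω) with hc_def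
    have hccard : Multiset.card c = n := by simp [hc_def]
    have hQc : Q ω = (c.sort (· ≤ ·)).getD (k - 1) 0 := hQ ω
    have hiff := le_orderStat_iff c (k - 1) (by omega) (S (Fin.last n) ω)
    rw [← hQc] at hiff
    rw [hiff]
    -- countP over c = card of filter over Fin n, then transfer to F
    have hb := countP_map_eq_card_filter Finset.univ (fun i : Fin n => S i.castSucc ω)
      (fun a => a < S (Fin.last n) ω)
    rw [hc_def, hb]
    -- now: filter over Fin n card ≤ k-1 ↔ F last (V ω) ≤ k-1
    have hFcard : F (Fin.last n) (V ω)
        = (Finset.univ.filter fun i : Fin n => S i.castSucc ω < S (Fin.last n) ω).card := by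
      show (Finset.univ.filter fun i : Fin (n+1) =>
        sfun (V ω i) < sfun (V ω (Fin.last n))).card = _
      have h1 : (Finset.univ.filter fun i : Fin (n+1) => sfun (V ω i) < sfun (V ω (Fin.last n)))
          = (Finset.univ.filter fun i : Fin n =>
              S i.castSucc ω < S (Fin.last n) ω).image Fin.castSucc := by
        ext i
        simp only [Finset.mem_filter, Finset.mem_univ, true_and, Finset.mem_image]
        constructor
        · intro hi
          rcases Fin.eq_castSucc_or_eq_last i with ⟨i', rfl⟩ | rfl
          · refine ⟨i', ?_, rfl⟩
            rw [hSV, hSV]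
            exact hi
          · exact absurd hi (lt_irrefl _)
        · rintro ⟨i', hi', rfl⟩
          rw [← hSV i'.castSucc ω, ← hSV (Fin.last n) ω]
          exact hi'
      rw [h1, Finset.card_image_of_injective _ (Fin.castSucc_injective n)]
    rw [hFcard]
  rw [hevent]
  -- final numeric step
  have hne : ((n + 1 : ℕ) : ℝ≥0∞) ≠ 0 := by
    simp
  have hnetop : ((n + 1 : ℕ) : ℝ≥0∞) ≠ ⊤ := by
    simp
  have hreal : (1 - α) * (n + 1 : ℝ) ≤ (k : ℝ) := by
    rw [hk]
    exact Nat.le_ceil _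
  have hofk : ((n + 1 : ℕ) : ℝ≥0∞) * ENNReal.ofReal (1 - α) ≤ (k : ℝ≥0∞) := by
    have : ((n + 1 : ℕ) : ℝ≥0∞) = ENNReal.ofReal ((n + 1 : ℕ) : ℝ) := by
      rw [ENNReal.ofReal_natCast]
    rw [this, ← ENNReal.ofReal_mul (by positivity)]
    calc ENNReal.ofReal (((n + 1 : ℕ) : ℝ) * (1 - α)) ≤ ENNReal.ofReal (k : ℝ) := by
          refine ENNReal.ofReal_le_ofReal ?_
          push_cast
          linarith
      _ = (k : ℝ≥0∞) := ENNReal.ofReal_natCast k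
  have hfinal : ((n + 1 : ℕ) : ℝ≥0∞) * ENNReal.ofReal (1 - α)
      ≤ ((n + 1 : ℕ) : ℝ≥0∞) * P (A (Fin.last n)) := by
    refine le_trans hofk ?_
    calc (k : ℝ≥0∞) ≤ (n + 1 : ℕ) * P (A (Fin.last n)) := by exact_mod_cast hsum2
      _ = ((n + 1 : ℕ) : ℝ≥0∞) * P (A (Fin.last n)) := by norm_cast
  exact (ENNReal.mul_le_mul_iff_right hne hnetop).mp hfinal
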